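/- Let G be a group, L a subgroup of G, d ≥ 1, and g : Fin d → G a complete transversal of the right cosets of L. Let φ : G → ℝ be a group homomorphism into the additive reals. Suppose z is a nonzero φ-pure element of MonoidAlgebra ℤ G with δ_φ(z) = δ. Then for all k, j : Fin d, every element l of L lying in the support of Λ(z) k j satisfies φ(l) = δ + φ(g k) − φ(g j). -/

import Mathlib

open scoped Classical

/-- For a nonzero `a` in the integral group ring, `deltaPhi φ a` is the minimum of `φ`
over the (finite, nonempty) support of `a`; junk value `0` for `a = 0`. -/
noncomputable def deltaPhi {G : Type*} [Group G] (φ : G → ℝ)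
    (a : MonoidAlgebra ℤ G) : ℝ :=
  if h : a.coeff.support.Nonempty then a.coeff.support.inf' h φ else 0

/-- The `φ`-leading term of `a`: the restriction of `a` to the elements `g` of its support
with `φ g = deltaPhi φ a`.  For `a = 0` this gives `0`. -/
noncomputable def leadPhi {G : Type*} [Group G] (φ : G → ℝ)
    (a : MonoidAlgebra ℤ G) : MonoidAlgebra ℤ G :=
  MonoidAlgebra.ofCoeff (Finsupp.filter (fun g => φ g = deltaPhi φ a) a.coeff)

/-- If `z` is a nonzero `φ`-pure element of the integral group ring of `G` with
`δ_φ(z) = δ`, and `Λ z k j` are the matrix coefficients of right multiplication by `z`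
with respect to a complete transversal `g` of the right cosets of `L`, then every
element `l` of `L` in the support of `Λ z k j` satisfies
`φ l = δ + φ (g k) - φ (g j)`. -/
theorem support_of_restriction_entries_of_pure {G : Type*} [Group G] (L : Subgroup G)
    (d : ℕ) (hd : 1 ≤ d) (g : Fin d → G)
    (hg : Function.Bijective fun p : L × Fin d => (p.1 : G) * g p.2)
    (φ : G → ℝ) (hφ : ∀ x y : G, φ (x * y) = φ x + φ y)
    (z : MonoidAlgebra ℤ G) (hz : z ≠ 0) (hpure : leadPhi φ z = z)
    (δ : ℝ) (hδ : deltaPhi φ z = δ)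
    (Λ : Fin d → Fin d → MonoidAlgebra ℤ L)
    (hΛ : ∀ k : Fin d,
      MonoidAlgebra.single (g k) (1 : ℤ) * z =
        ∑ j : Fin d, (MonoidAlgebra.mapDomainRingHom ℤ L.subtype) (Λ k j) *
          MonoidAlgebra.single (g j) (1 : ℤ)) :
    ∀ (k j : Fin d), ∀ l ∈ (Λ k j).coeff.support, φ (l : G) = δ + φ (g k) - φ (g j) := by
  intro k j l hl
  have h1 : φ 1 = 0 := by have := hφ 1 1; simp at this; linarith
  have hinv : ∀ x : G, φ x⁻¹ = -φ x := by
    intro x; have := hφ x x⁻¹; simp [h1] at this; linarith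
  have hsupp : ∀ s ∈ z.coeff.support, φ s = δ := by
    intro s hs
    by_contra hne
    have h2 : (Finsupp.filter (fun g => φ g = deltaPhi φ z) z.coeff) s = z.coeff s := by
      have := congrArg (fun x => x.coeff s) hpure; exact this
    rw [Finsupp.filter_apply, if_neg (by rw [hδ]; exact hne)] at h2
    exact Finsupp.mem_support_iff.mp hs h2.symm
  have hmap : ∀ a : MonoidAlgebra ℤ L,
      ((MonoidAlgebra.mapDomainRingHom ℤ L.subtype) a).coeff = Finsupp.mapDomain L.subtype a.coeff :=
    fun _ => rfl
  set y : G := (l : G) * g j with hy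
  have hc : z.coeff ((g k)⁻¹ * y) =
      ∑ j' : Fin d, ((MonoidAlgebra.mapDomainRingHom ℤ L.subtype) (Λ k j')).coeff
        (y * (g j')⁻¹) := by
    calc z.coeff ((g k)⁻¹ * y) = (MonoidAlgebra.single (g k) (1 : ℤ) * z).coeff y := by
          rw [MonoidAlgebra.coeff_single_mul_apply, one_mul]
      _ = (∑ j' : Fin d, (MonoidAlgebra.mapDomainRingHom ℤ L.subtype) (Λ k j') *
            MonoidAlgebra.single (g j') (1 : ℤ)).coeff y := by rw [hΛ k]
      _ = ∑ j' : Fin d, ((MonoidAlgebra.mapDomainRingHom ℤ L.subtype) (Λ k j') *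
            MonoidAlgebra.single (g j') (1 : ℤ)).coeff y := by
          rw [MonoidAlgebra.coeff_sum, Finset.sum_apply']
      _ = _ := by simp [MonoidAlgebra.coeff_mul_single_apply]
  have hsum : (∑ j' : Fin d, ((MonoidAlgebra.mapDomainRingHom ℤ L.subtype) (Λ k j')).coeff
      (y * (g j')⁻¹)) = (Λ k j).coeff l := by
    rw [Finset.sum_eq_single j]
    · have h3 : y * (g j)⁻¹ = (L.subtype l) := by simp [hy]
      rw [h3, hmap, Finsupp.mapDomain_apply L.subtype_injective]
    · intro j' _ hj'
      rw [hmap]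
      apply Finsupp.mapDomain_notin_range
      rintro ⟨l', hl'⟩
      have he : (fun p : L × Fin d => (p.1 : G) * g p.2) (l', j') =
          (fun p : L × Fin d => (p.1 : G) * g p.2) (l, j) := by
        simp only [Subgroup.coe_subtype] at hl'
        simp only [hy] at hl' ⊢
        rw [hl']; group
      exact hj' (congrArg Prod.snd (hg.injective he))
    · intro h; exact absurd (Finset.mem_univ j) h
  rw [hsum] at hc
  have hzs : z.coeff ((g k)⁻¹ * y) ≠ 0 := by
    rw [hc]; exact Finsupp.mem_support_iff.mp hl
  have hφs := hsupp _ (Finsupp.mem_support_iff.mpr hzs)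
  rw [hy, hφ, hφ, hinv] at hφs
  linarith
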